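/- Let X ⊆ ℝⁿ be nonempty closed convex, f : ℝⁿ → ℝ be μ-strongly convex on X with L-Lipschitz gradient, μ ≤ L ≤ γ, and let x* be the minimizer of f over X. For x ∈ X define x̂ = Π_X(x − (1/γ)∇f(x)). Then ⟨x − x̂, x − x*⟩ ≥ (1/2)‖x̂ − x‖² + (μ/(2γ))‖x* − x‖². -/

import Mathlib

open scoped RealInnerProductSpace

lemma descent_aux {n : ℕ} {X : Set (EuclideanSpace ℝ (Fin n))} (hXcv : Convex ℝ X)
    {f : EuclideanSpace ℝ (Fin n) → ℝ}
    {g : EuclideanSpace ℝ (Fin n) → EuclideanSpace ℝ (Fin n)}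
    (hg : ∀ x, HasGradientAt f (g x) x)
    {L : ℝ} (hL : 0 ≤ L)
    (hlip : ∀ x ∈ X, ∀ y ∈ X, ‖g x - g y‖ ≤ L * ‖x - y‖)
    {x y : EuclideanSpace ℝ (Fin n)} (hx : x ∈ X) (hy : y ∈ X) :
    f y ≤ f x + ⟪g x, y - x⟫ + (L/2) * ‖y - x‖^2 := by
  set c : ℝ → EuclideanSpace ℝ (Fin n) := fun t => x + t • (y - x) with hc_def
  have hc : ∀ t : ℝ, HasDerivAt c (y - x) t := by
    intro t
    have h1 : HasDerivAt (fun t : ℝ => t • (y - x)) ((1:ℝ) • (y - x)) t :=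
      (hasDerivAt_id t).smul_const (y - x)
    rw [one_smul] at h1
    exact h1.const_add x
  have hmem : ∀ t ∈ Set.Icc (0:ℝ) 1, c t ∈ X := fun t ht =>
    hXcv.add_smul_sub_mem hx hy ht
  have hderiv : ∀ t ∈ Set.uIcc (0:ℝ) 1,
      HasDerivAt (f ∘ c) ⟪g (c t), y - x⟫ t := by
    intro t _
    have := ((hg (c t)).hasFDerivAt).comp_hasDerivAt t (hc t)
    simpa [InnerProductSpace.toDual_apply_apply] using this
  have hcont : ContinuousOn (fun t : ℝ => ⟪g (c t), y - x⟫) (Set.uIcc (0:ℝ) 1) := by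
    rw [Set.uIcc_of_le (by norm_num : (0:ℝ) ≤ 1)]
    have hlipOn : LipschitzOnWith (Real.toNNReal (L * ‖y - x‖^2))
        (fun t : ℝ => ⟪g (c t), y - x⟫) (Set.Icc (0:ℝ) 1) := by
      rw [lipschitzOnWith_iff_dist_le_mul]
      intro t ht s hs
      have h1 : dist ⟪g (c t), y - x⟫ ⟪g (c s), y - x⟫
          = |⟪g (c t) - g (c s), y - x⟫| := by
        rw [Real.dist_eq, inner_sub_left]
      rw [h1]
      calc |⟪g (c t) - g (c s), y - x⟫| ≤ ‖g (c t) - g (c s)‖ * ‖y - x‖ :=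
            abs_real_inner_le_norm _ _
        _ ≤ (L * ‖c t - c s‖) * ‖y - x‖ := by
            gcongr; exact hlip _ (hmem t ht) _ (hmem s hs)
        _ = (L * ‖y - x‖^2) * dist t s := by
            have : c t - c s = (t - s) • (y - x) := by
              simp [hc_def]; module
            rw [this, norm_smul, Real.dist_eq, Real.norm_eq_abs]; ring
        _ ≤ Real.toNNReal (L * ‖y - x‖^2) * dist t s := by
            gcongr; exact Real.le_coe_toNNReal _
    exact hlipOn.continuousOn
  have hint : IntervalIntegrable (fun t : ℝ => ⟪g (c t), y - x⟫)
      MeasureTheory.volume 0 1 := hcont.intervalIntegrable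
  have hftc : ∫ t in (0:ℝ)..1, ⟪g (c t), y - x⟫ = f (c 1) - f (c 0) :=
    intervalIntegral.integral_eq_sub_of_hasDerivAt hderiv hint
  have hc0 : c 0 = x := by simp [hc_def]
  have hc1 : c 1 = y := by simp [hc_def]
  have hbound : ∫ t in (0:ℝ)..1, ⟪g (c t), y - x⟫
      ≤ ∫ t in (0:ℝ)..1, (⟪g x, y - x⟫ + (L * ‖y - x‖^2) * t) := by
    apply intervalIntegral.integral_mono_on (by norm_num) hint
    · apply IntervalIntegrable.add intervalIntegrable_const
      exact (continuous_const.mul continuous_id').intervalIntegrable _ _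
    · intro t ht
      have hct : c t ∈ X := hmem t ht
      have h1 : ⟪g (c t), y - x⟫ = ⟪g x, y - x⟫ + ⟪g (c t) - g x, y - x⟫ := by
        rw [inner_sub_left]; ring
      rw [h1]
      gcongr
      calc ⟪g (c t) - g x, y - x⟫ ≤ ‖g (c t) - g x‖ * ‖y - x‖ :=
            real_inner_le_norm _ _
        _ ≤ (L * ‖c t - x‖) * ‖y - x‖ := by gcongr; exact hlip _ hct _ hx
        _ = (L * ‖y - x‖^2) * t := by
            have : c t - x = t • (y - x) := by simp [hc_def]
            rw [this, norm_smul, Real.norm_eq_abs, abs_of_nonneg ht.1]; ring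
  have hrhs : ∫ t in (0:ℝ)..1, (⟪g x, y - x⟫ + (L * ‖y - x‖^2) * t)
      = ⟪g x, y - x⟫ + (L/2) * ‖y - x‖^2 := by
    rw [intervalIntegral.integral_add (f := fun _ => ⟪g x, y - x⟫)
        (g := fun t : ℝ => (L * ‖y - x‖^2) * t) intervalIntegrable_const
        ((continuous_const.mul continuous_id').intervalIntegrable _ _),
      intervalIntegral.integral_const, intervalIntegral.integral_const_mul,
      integral_id]
    simp; ring
  have := hbound
  rw [hftc, hc0, hc1, hrhs] at this
  linarith

theorem stmt_1 {n : ℕ} (X : Set (EuclideanSpace ℝ (Fin n)))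
    (hXne : X.Nonempty) (hXcl : IsClosed X) (hXcv : Convex ℝ X)
    (f : EuclideanSpace ℝ (Fin n) → ℝ)
    (g : EuclideanSpace ℝ (Fin n) → EuclideanSpace ℝ (Fin n))
    (hg : ∀ x, HasGradientAt f (g x) x)
    (μ L γ : ℝ) (hμ : 0 < μ) (hμL : μ ≤ L) (hLγ : L ≤ γ)
    (hsc : ∀ x ∈ X, ∀ y ∈ X, f y ≥ f x + ⟪g x, y - x⟫ + (μ/2) * ‖y - x‖^2)
    (hlip : ∀ x ∈ X, ∀ y ∈ X, ‖g x - g y‖ ≤ L * ‖x - y‖)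
    (xstar : EuclideanSpace ℝ (Fin n)) (hxstar : xstar ∈ X)
    (hmin : ∀ z ∈ X, f xstar ≤ f z)
    (x : EuclideanSpace ℝ (Fin n)) (hx : x ∈ X)
    (xhat : EuclideanSpace ℝ (Fin n)) (hhat : xhat ∈ X)
    (hproj : ∀ z ∈ X, ‖xhat - (x - (1/γ) • g x)‖ ≤ ‖z - (x - (1/γ) • g x)‖) :
    ⟪x - xhat, x - xstar⟫ ≥ (1/2) * ‖xhat - x‖^2 + (μ/(2*γ)) * ‖xstar - x‖^2 := by
  have hγ : 0 < γ := hμ.trans_le (hμL.trans hLγ)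
  have hL : 0 ≤ L := le_of_lt (hμ.trans_le hμL)
  set u : EuclideanSpace ℝ (Fin n) := x - (1/γ) • g x with hu_def
  -- projection characterization
  have hinf : ‖u - xhat‖ = ⨅ w : X, ‖u - w‖ := by
    apply le_antisymm
    · haveI : Nonempty X := ⟨⟨xhat, hhat⟩⟩
      exact le_ciInf fun w => by
        rw [norm_sub_rev u, norm_sub_rev u (w : EuclideanSpace ℝ (Fin n))]
        exact hproj w w.2
    · exact ciInf_le ⟨0, fun r ⟨w, hw⟩ => hw ▸ norm_nonneg _⟩ (⟨xhat, hhat⟩ : X)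
  have hkey : ⟪u - xhat, xstar - xhat⟫ ≤ 0 :=
    (norm_eq_iInf_iff_real_inner_le_zero hXcv hhat).mp hinf xstar hxstar
  -- strong convexity and descent lemma
  have h1 := hsc x hx xstar hxstar
  have h2 := hmin xhat hhat
  have h3 := descent_aux hXcv hg hL hlip hx hhat
  -- unfold inner products
  have hexp : ⟪u - xhat, xstar - xhat⟫
      = ⟪x - xhat, xstar - xhat⟫ - (1/γ) * ⟪g x, xstar - xhat⟫ := by
    have : u - xhat = (x - xhat) - (1/γ) • g x := by rw [hu_def]; abel
    rw [this, inner_sub_left, real_inner_smul_left]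
  have he1 : ⟪x - xhat, xstar - xhat⟫
      = -⟪x - xhat, x - xstar⟫ + ‖xhat - x‖^2 := by
    have h' : xstar - xhat = -(x - xstar) + (x - xhat) := by abel
    have h'' : ‖x - xhat‖ = ‖xhat - x‖ := norm_sub_rev _ _
    rw [h', inner_add_right, inner_neg_right, real_inner_self_eq_norm_sq, h'']
  have he2 : ⟪g x, xstar - xhat⟫ = ⟪g x, xstar - x⟫ - ⟪g x, xhat - x⟫ := by
    have h' : xstar - xhat = (xstar - x) - (xhat - x) := by abel
    rw [h', inner_sub_right]
  rw [hexp, he1, he2] at hkey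
  -- combine
  have hPQ : ⟪g x, xstar - x⟫ - ⟪g x, xhat - x⟫
      ≤ (γ/2) * ‖xhat - x‖^2 - (μ/2) * ‖xstar - x‖^2 := by
    nlinarith [sq_nonneg ‖xhat - x‖]
  have hdiv : (1/γ) * (⟪g x, xstar - x⟫ - ⟪g x, xhat - x⟫)
      ≤ (1/γ) * ((γ/2) * ‖xhat - x‖^2 - (μ/2) * ‖xstar - x‖^2) := by
    apply mul_le_mul_of_nonneg_left hPQ
    positivity
  have heq : (1/γ) * ((γ/2) * ‖xhat - x‖^2 - (μ/2) * ‖xstar - x‖^2)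
      = (1/2) * ‖xhat - x‖^2 - (μ/(2*γ)) * ‖xstar - x‖^2 := by
    field_simp
  rw [heq] at hdiv
  linarith
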